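/- arXiv:1412.8146 — 2 statements merged into one kernel-verified Lean document; each statement's English description precedes it below -/
import Mathlib

section
/- Convergence of L^{p(·)}-bounded martingales: Let p : Ω → [1, ∞] be a variable exponent. Then every martingale, and every nonnegative submartingale, f = (f_n)_{n≥0} satisfying sup_n ‖f_n‖_{p(·)} < ∞ converges almost everywhere to a measurable function f_∞ with ‖f_∞‖_{p(·)} < ∞. -/
open MeasureTheory ENNReal Filter Topology

/-- The variable exponent modular
`ρ_{p(·)}(u) = ∫_{Ω∖Ω_∞} u^{p(ω)} dμ + ess sup_{Ω_∞} u`, where `Ω_∞ = {p = ∞}`. -/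
noncomputable def varModular {Ω : Type*} [MeasurableSpace Ω] (μ : Measure Ω)
    (p : Ω → ℝ≥0∞) (u : Ω → ℝ≥0∞) : ℝ≥0∞ :=
  (∫⁻ ω in {ω | p ω ≠ ∞}, u ω ^ (p ω).toReal ∂μ) +
    essSup u (μ.restrict {ω | p ω = ∞})

/-- The Luxemburg norm `‖u‖_{p(·)} = inf {γ > 0 : ρ_{p(·)}(u/γ) ≤ 1}`. -/
noncomputable def varNorm {Ω : Type*} [MeasurableSpace Ω] (μ : Measure Ω)
    (p : Ω → ℝ≥0∞) (u : Ω → ℝ≥0∞) : ℝ≥0∞ :=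
  sInf {γ : ℝ≥0∞ | 0 < γ ∧ γ ≠ ∞ ∧ varModular μ p (fun ω => u ω / γ) ≤ 1}

private lemma ennreal_le_rpow_add_one {t : ℝ≥0∞} {r : ℝ} (hr : 1 ≤ r) : t ≤ t ^ r + 1 := by
  rcases le_or_gt t 1 with h | h
  · exact h.trans le_add_self
  · calc t = t ^ (1 : ℝ) := (ENNReal.rpow_one t).symm
      _ ≤ t ^ r := ENNReal.rpow_le_rpow_of_exponent_le h.le hr
      _ ≤ t ^ r + 1 := le_self_add

/-- **Convergence of `L^{p(·)}`-bounded martingales.**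
Every martingale, and every nonnegative submartingale, that is bounded in `L^{p(·)}`
(`p : Ω → [1,∞]`) converges almost everywhere to a function `f_∞ ∈ L^{p(·)}`. -/
theorem martingale_convergence_variable_exponent
    {Ω : Type*} {m0 : MeasurableSpace Ω} (μ : Measure Ω) [IsProbabilityMeasure μ]
    (ℱ : Filtration ℕ m0) (hsup : (⨆ n, (ℱ n : MeasurableSpace Ω)) = m0)
    (p : Ω → ℝ≥0∞) (hpm : Measurable p) (hp1 : ∀ ω, 1 ≤ p ω)
    (f : ℕ → Ω → ℝ)
    (hf : Martingale f ℱ μ ∨ (Submartingale f ℱ μ ∧ ∀ n ω, 0 ≤ f n ω))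
    (hbdd : (⨆ n, varNorm μ p fun ω => ENNReal.ofReal |f n ω|) < ∞) :
    ∃ finf : Ω → ℝ, Measurable finf ∧
      (∀ᵐ ω ∂μ, Tendsto (fun n => f n ω) atTop (𝓝 (finf ω))) ∧
      varNorm μ p (fun ω => ENNReal.ofReal |finf ω|) < ∞ := by
  classical
  have hsub : Submartingale f ℱ μ := hf.elim Martingale.submartingale And.left
  have hmeas : ∀ n, Measurable (f n) :=
    fun n => ((hsub.stronglyMeasurable n).measurable).mono (ℱ.le n) le_rfl
  set u : ℕ → Ω → ℝ≥0∞ := fun n ω => ENNReal.ofReal |f n ω| with hu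
  have humeas : ∀ n, Measurable (u n) :=
    fun n => ENNReal.measurable_ofReal.comp (hmeas n).abs
  set Γ : ℝ≥0∞ := (⨆ n, varNorm μ p (u n)) + 1 with hΓdef
  have hΓtop : Γ ≠ ∞ := ENNReal.add_ne_top.2 ⟨hbdd.ne, ENNReal.one_ne_top⟩
  have hΓpos : Γ ≠ 0 := (lt_of_lt_of_le zero_lt_one le_add_self).ne'
  -- each level has modular at `Γ` at most `1`
  have hmodΓ : ∀ n, varModular μ p (fun ω => u n ω / Γ) ≤ 1 := by
    intro n
    have h1 : varNorm μ p (u n) < Γ :=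
      lt_of_le_of_lt (le_iSup (fun n => varNorm μ p (u n)) n)
        (ENNReal.lt_add_right hbdd.ne one_ne_zero)
    obtain ⟨γ, ⟨hγ0, hγtop, hγmod⟩, hγΓ⟩ := sInf_lt_iff.mp h1
    refine le_trans ?_ hγmod
    unfold varModular
    refine add_le_add (lintegral_mono fun ω => ENNReal.rpow_le_rpow
      (ENNReal.div_le_div_left hγΓ.le _) ENNReal.toReal_nonneg)
      (essSup_mono_ae (Filter.Eventually.of_forall fun ω =>
        ENNReal.div_le_div_left hγΓ.le _))
  have hA : ∀ n, (∫⁻ ω in {ω | p ω ≠ ∞}, (u n ω / Γ) ^ (p ω).toReal ∂μ) ≤ 1 :=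
    fun n => le_trans le_self_add (hmodΓ n)
  have hB : ∀ n, essSup (fun ω => u n ω / Γ) (μ.restrict {ω | p ω = ∞}) ≤ 1 :=
    fun n => le_trans le_add_self (hmodΓ n)
  -- `L¹`-boundedness
  have hL1 : ∀ n, ∫⁻ ω, u n ω ∂μ ≤ 3 * Γ := by
    intro n
    have hsplit : ∫⁻ ω, u n ω / Γ ∂μ ≤ 3 := by
      have hcompl : {ω | p ω = ∞}ᶜ = {ω | p ω ≠ ∞} := rfl
      have hmeasset : MeasurableSet {ω | p ω = ∞} := hpm (measurableSet_singleton ∞)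
      rw [← lintegral_add_compl (fun ω => u n ω / Γ) hmeasset, hcompl]
      have h1 : (∫⁻ ω in {ω | p ω = ∞}, u n ω / Γ ∂μ) ≤ 1 := by
        calc (∫⁻ ω in {ω | p ω = ∞}, u n ω / Γ ∂μ)
            ≤ ∫⁻ _ in {ω | p ω = ∞}, 1 ∂μ := by
              refine lintegral_mono_ae ?_
              filter_upwards [ae_le_essSup (μ := μ.restrict {ω | p ω = ∞})
                (fun ω => u n ω / Γ)] with ω hω
              exact hω.trans (hB n)
          _ ≤ 1 := by
              rw [setLIntegral_const, one_mul]
              exact prob_le_one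
      have h2 : (∫⁻ ω in {ω | p ω ≠ ∞}, u n ω / Γ ∂μ) ≤ 2 := by
        calc (∫⁻ ω in {ω | p ω ≠ ∞}, u n ω / Γ ∂μ)
            ≤ ∫⁻ ω in {ω | p ω ≠ ∞}, ((u n ω / Γ) ^ (p ω).toReal + 1) ∂μ := by
              refine setLIntegral_mono ((((humeas n).div measurable_const).pow
                hpm.ennreal_toReal).add measurable_const) fun ω hω => ?_
              refine ennreal_le_rpow_add_one ?_
              have : (1 : ℝ≥0∞).toReal ≤ (p ω).toReal :=
                ENNReal.toReal_mono hω (hp1 ω)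
              simpa using this
          _ = (∫⁻ ω in {ω | p ω ≠ ∞}, (u n ω / Γ) ^ (p ω).toReal ∂μ)
              + ∫⁻ _ in {ω | p ω ≠ ∞}, 1 ∂μ := lintegral_add_right _ measurable_const
          _ ≤ 1 + 1 := by
              refine add_le_add (hA n) ?_
              rw [setLIntegral_const, one_mul]
              exact prob_le_one
          _ = 2 := by norm_num
      calc (∫⁻ ω in {ω | p ω = ∞}, u n ω / Γ ∂μ)
            + ∫⁻ ω in {ω | p ω ≠ ∞}, u n ω / Γ ∂μ ≤ 1 + 2 := add_le_add h1 h2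
        _ = 3 := by norm_num
    have : ∫⁻ ω, u n ω ∂μ = Γ * ∫⁻ ω, u n ω / Γ ∂μ := by
      rw [← lintegral_const_mul Γ (f := fun ω => u n ω / Γ) ((humeas n).div measurable_const)]
      refine lintegral_congr fun ω => ?_
      rw [ENNReal.mul_div_cancel' (fun h => absurd h hΓpos) (fun h => absurd h hΓtop)]
    rw [this, mul_comm]
    exact mul_le_mul_left hsplit Γ
  -- almost everywhere convergence
  set g : Ω → ℝ := ℱ.limitProcess f μ with hg
  have h3Γ : ((3 * Γ).toNNReal : ℝ≥0∞) = 3 * Γ :=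
    ENNReal.coe_toNNReal (ENNReal.mul_ne_top (ENNReal.ofNat_ne_top) hΓtop)
  have hR : ∀ n, eLpNorm (f n) 1 μ ≤ (3 * Γ).toNNReal := by
    intro n
    have heq : eLpNorm (f n) 1 μ = ∫⁻ ω, u n ω ∂μ := by
      rw [eLpNorm_one_eq_lintegral_enorm]
      refine lintegral_congr fun ω => ?_
      simp only [hu]
      rw [Real.enorm_eq_ofReal_abs]
    rw [heq, h3Γ]
    exact hL1 n
  have htend : ∀ᵐ ω ∂μ, Tendsto (fun n => f n ω) atTop (𝓝 (g ω)) :=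
    hsub.ae_tendsto_limitProcess hR
  have hgmeas : Measurable g := by
    have h1 : StronglyMeasurable[⨆ n, (ℱ n : MeasurableSpace Ω)] g :=
      ℱ.stronglyMeasurable_limitProcess
    rw [hsup] at h1
    exact h1.measurable
  -- convergence of the `ℝ≥0∞`-valued functions
  set v : Ω → ℝ≥0∞ := fun ω => ENNReal.ofReal |g ω| with hv
  have htendv : ∀ᵐ ω ∂μ, Tendsto (fun n => u n ω) atTop (𝓝 (v ω)) := by
    filter_upwards [htend] with ω hω
    exact (ENNReal.continuous_ofReal.comp continuous_abs).continuousAt.tendsto.comp hω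
  have htendvΓ : ∀ᵐ ω ∂μ, Tendsto (fun n => u n ω / Γ) atTop (𝓝 (v ω / Γ)) := by
    filter_upwards [htendv] with ω hω
    exact ((ENNReal.continuous_div_const Γ hΓpos).continuousAt).tendsto.comp hω
  -- the modular of `v / Γ` pieces
  have hAinf : (∫⁻ ω in {ω | p ω ≠ ∞}, (v ω / Γ) ^ (p ω).toReal ∂μ) ≤ 1 := by
    have heq : ∀ᵐ ω ∂(μ.restrict {ω | p ω ≠ ∞}),
        (v ω / Γ) ^ (p ω).toReal
          = Filter.liminf (fun n => (u n ω / Γ) ^ (p ω).toReal) atTop := by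
      refine ae_restrict_of_ae ?_
      filter_upwards [htendvΓ] with ω hω
      exact (Tendsto.liminf_eq ((ENNReal.continuous_rpow_const.tendsto _).comp hω)).symm
    calc (∫⁻ ω in {ω | p ω ≠ ∞}, (v ω / Γ) ^ (p ω).toReal ∂μ)
        = ∫⁻ ω in {ω | p ω ≠ ∞},
            Filter.liminf (fun n => (u n ω / Γ) ^ (p ω).toReal) atTop ∂μ :=
          lintegral_congr_ae heq
      _ ≤ Filter.liminf
            (fun n => ∫⁻ ω in {ω | p ω ≠ ∞}, (u n ω / Γ) ^ (p ω).toReal ∂μ) atTop :=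
          lintegral_liminf_le fun n => ((humeas n).div measurable_const).pow
            hpm.ennreal_toReal
      _ ≤ 1 := by
          refine Filter.liminf_le_of_frequently_le' ?_
          exact Filter.Frequently.of_forall fun n => hA n
  have hBinf : essSup (fun ω => v ω / Γ) (μ.restrict {ω | p ω = ∞}) ≤ 1 := by
    refine essSup_le_of_ae_le 1 ?_
    have hub : ∀ᵐ ω ∂(μ.restrict {ω | p ω = ∞}), ∀ n, u n ω / Γ ≤ 1 := by
      rw [ae_all_iff]
      intro n
      filter_upwards [ae_le_essSup (μ := μ.restrict {ω | p ω = ∞})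
        (fun ω => u n ω / Γ)] with ω hω
      exact hω.trans (hB n)
    filter_upwards [hub, ae_restrict_of_ae htendvΓ] with ω h1 h2
    exact le_of_tendsto h2 (Filter.Eventually.of_forall h1)
  -- assemble: the modular of `v / (2Γ)` is at most `1`
  have hdiv2 : ∀ ω, v ω / (2 * Γ) = (v ω / Γ) * 2⁻¹ := by
    intro ω
    rw [div_eq_mul_inv, ENNReal.mul_inv (Or.inl two_ne_zero) (Or.inl ENNReal.ofNat_ne_top),
      div_eq_mul_inv, mul_comm (2 : ℝ≥0∞)⁻¹ Γ⁻¹, ← mul_assoc]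
  have hvfin : ∀ ω, v ω / Γ ≠ ∞ := fun ω => by
    rw [div_eq_mul_inv]
    exact ENNReal.mul_ne_top ENNReal.ofReal_ne_top (ENNReal.inv_ne_top.mpr hΓpos)
  have hmod2 : varModular μ p (fun ω => v ω / (2 * Γ)) ≤ 1 := by
    unfold varModular
    have hAle : (∫⁻ ω in {ω | p ω ≠ ∞}, (v ω / (2 * Γ)) ^ (p ω).toReal ∂μ) ≤ 2⁻¹ := by
      calc (∫⁻ ω in {ω | p ω ≠ ∞}, (v ω / (2 * Γ)) ^ (p ω).toReal ∂μ)
          ≤ ∫⁻ ω in {ω | p ω ≠ ∞}, (v ω / Γ) ^ (p ω).toReal * 2⁻¹ ∂μ := by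
            refine setLIntegral_mono (((hgmeas.abs.ennreal_ofReal.div
              measurable_const).pow hpm.ennreal_toReal).mul_const _) fun ω hω => ?_
            rw [hdiv2 ω, ENNReal.mul_rpow_of_ne_top (hvfin ω) (by simp)]
            refine mul_le_mul_right ?_ _
            have h1r : (1 : ℝ) ≤ (p ω).toReal := by
              have : (1 : ℝ≥0∞).toReal ≤ (p ω).toReal := ENNReal.toReal_mono hω (hp1 ω)
              simpa using this
            calc ((2 : ℝ≥0∞)⁻¹) ^ (p ω).toReal ≤ (2 : ℝ≥0∞)⁻¹ ^ (1 : ℝ) :=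
                  ENNReal.rpow_le_rpow_of_exponent_ge (by simp) h1r
              _ = 2⁻¹ := ENNReal.rpow_one _
        _ = (∫⁻ ω in {ω | p ω ≠ ∞}, (v ω / Γ) ^ (p ω).toReal ∂μ) * 2⁻¹ :=
            lintegral_mul_const _ (((hgmeas.abs.ennreal_ofReal).div
              measurable_const).pow hpm.ennreal_toReal)
        _ ≤ 1 * 2⁻¹ := mul_le_mul_left hAinf _
        _ = 2⁻¹ := one_mul _
    have hBle : essSup (fun ω => v ω / (2 * Γ)) (μ.restrict {ω | p ω = ∞}) ≤ 2⁻¹ := by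
      refine essSup_le_of_ae_le _ ?_
      filter_upwards [ae_le_essSup (μ := μ.restrict {ω | p ω = ∞})
        (fun ω => v ω / Γ)] with ω hω
      calc v ω / (2 * Γ) = (v ω / Γ) * 2⁻¹ := hdiv2 ω
        _ ≤ 1 * 2⁻¹ := mul_le_mul_left (hω.trans hBinf) _
        _ = 2⁻¹ := one_mul _
    calc (∫⁻ ω in {ω | p ω ≠ ∞}, (v ω / (2 * Γ)) ^ (p ω).toReal ∂μ)
          + essSup (fun ω => v ω / (2 * Γ)) (μ.restrict {ω | p ω = ∞})
        ≤ 2⁻¹ + 2⁻¹ := add_le_add hAle hBle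
      _ = 1 := ENNReal.inv_two_add_inv_two
  refine ⟨g, hgmeas, htend, ?_⟩
  have hmem : 2 * Γ ∈ {γ : ℝ≥0∞ | 0 < γ ∧ γ ≠ ∞ ∧
      varModular μ p (fun ω => v ω / γ) ≤ 1} :=
    ⟨ENNReal.mul_pos two_ne_zero hΓpos,
     ENNReal.mul_ne_top ENNReal.ofNat_ne_top hΓtop, hmod2⟩
  calc varNorm μ p v ≤ 2 * Γ := sInf_le hmem
    _ < ∞ := lt_top_iff_ne_top.2 (ENNReal.mul_ne_top ENNReal.ofNat_ne_top hΓtop)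
end

section
/- Embedding of variable exponent Lebesgue spaces: Let p, q : Ω → [1, ∞] be variable exponents. Then L^{p(·)} ⊆ L^{q(·)} if and only if p(ω) ≥ q(ω) for almost every ω, and in that case ‖f‖_{q(·)} ≤ 2‖f‖_{p(·)} for every f ∈ L^{p(·)}. -/
open MeasureTheory ENNReal Filter Topology

section Aux
variable {Ω : Type*} [MeasurableSpace Ω] {μ : Measure Ω}

lemma modular_half [IsProbabilityMeasure μ] {p q : Ω → ℝ≥0∞}
    (hpm : Measurable p) (hqm : Measurable q)
    (hq1 : ∀ ω, 1 ≤ q ω) (hqp : ∀ᵐ ω ∂μ, q ω ≤ p ω)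
    {w : Ω → ℝ≥0∞} (hwm : Measurable w)
    (hmod : varModular μ p w ≤ 1) :
    varModular μ q (fun ω => w ω / 2) ≤ 1 := by
  classical
  set s := essSup w (μ.restrict {ω | p ω = ∞}) with hs_def
  set I := ∫⁻ ω in {ω | p ω ≠ ∞}, w ω ^ (p ω).toReal ∂μ with hI_def
  have hIs : I + s ≤ 1 := hmod
  have hs1 : s ≤ 1 := le_trans le_add_self hIs
  have hpinf : MeasurableSet {ω | p ω = ∞} := hpm (measurableSet_singleton ∞)
  have hqinf : MeasurableSet {ω | q ω = ∞} := hqm (measurableSet_singleton ∞)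
  have hwle : ∀ᵐ ω ∂μ, ω ∈ {ω | p ω = ∞} → w ω ≤ s := by
    have h := ENNReal.ae_le_essSup (μ := μ.restrict {ω | p ω = ∞}) w
    rwa [ae_restrict_iff' hpinf] at h
  set A := {ω | q ω ≠ ∞} ∩ {ω | p ω ≠ ∞} with hA
  set B := {ω | q ω ≠ ∞} ∩ {ω | p ω = ∞} with hB
  have hAm : MeasurableSet A := hqinf.compl.inter hpinf.compl
  have hBm : MeasurableSet B := hqinf.compl.inter hpinf
  have hABdisj : Disjoint A B := by
    rw [Set.disjoint_left]; rintro ω ⟨-, h1⟩ ⟨-, h2⟩; exact h1 h2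
  have hABunion : A ∪ B = {ω | q ω ≠ ∞} := by
    ext ω; by_cases h : p ω = ∞ <;> simp [hA, hB, h]
  have hsplit : (∫⁻ ω in {ω | q ω ≠ ∞}, (w ω / 2) ^ (q ω).toReal ∂μ)
      = (∫⁻ ω in A, (w ω / 2) ^ (q ω).toReal ∂μ)
        + ∫⁻ ω in B, (w ω / 2) ^ (q ω).toReal ∂μ := by
    rw [← hABunion, lintegral_union hBm hABdisj]
  have hboundA : (∫⁻ ω in A, (w ω / 2) ^ (q ω).toReal ∂μ)
      ≤ 2⁻¹ * μ A + 2⁻¹ * I := by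
    have h1 : (∫⁻ ω in A, (w ω / 2) ^ (q ω).toReal ∂μ)
        ≤ ∫⁻ ω in A, 2⁻¹ * (1 + w ω ^ (p ω).toReal) ∂μ := by
      apply setLIntegral_mono_ae
      · exact (measurable_const.mul (measurable_const.add
          (hwm.pow hpm.ennreal_toReal))).aemeasurable
      · filter_upwards [hqp] with ω hqpω hωA
        obtain ⟨hqne, hpne⟩ := hωA
        have hq1' : (1:ℝ) ≤ (q ω).toReal := by
          have := ENNReal.toReal_mono hqne (hq1 ω); simpa using this
        have hqR0 : (0:ℝ) ≤ (q ω).toReal := by linarith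
        have hqp' : (q ω).toReal ≤ (p ω).toReal := ENNReal.toReal_mono hpne hqpω
        have e1 : (w ω / 2) ^ (q ω).toReal
            = w ω ^ (q ω).toReal * 2⁻¹ ^ (q ω).toReal := by
          rw [div_eq_mul_inv, ENNReal.mul_rpow_of_nonneg _ _ hqR0]
        rw [e1]
        have h2inv : (2⁻¹ : ℝ≥0∞) ^ (q ω).toReal ≤ 2⁻¹ := by
          calc (2⁻¹ : ℝ≥0∞) ^ (q ω).toReal ≤ 2⁻¹ ^ (1:ℝ) :=
                ENNReal.rpow_le_rpow_of_exponent_ge (by norm_num) hq1'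
            _ = 2⁻¹ := by rw [ENNReal.rpow_one]
        have hwq : w ω ^ (q ω).toReal ≤ 1 + w ω ^ (p ω).toReal := by
          rcases le_total (w ω) 1 with hle | hle
          · exact le_trans (ENNReal.rpow_le_one hle hqR0) le_self_add
          · exact le_trans (ENNReal.rpow_le_rpow_of_exponent_le hle hqp') le_add_self
        calc w ω ^ (q ω).toReal * 2⁻¹ ^ (q ω).toReal
            ≤ (1 + w ω ^ (p ω).toReal) * 2⁻¹ := mul_le_mul' hwq h2inv
          _ = 2⁻¹ * (1 + w ω ^ (p ω).toReal) := mul_comm _ _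
    refine h1.trans ?_
    rw [lintegral_const_mul _ (f := fun ω => 1 + w ω ^ (p ω).toReal)
        (measurable_const.add (hwm.pow hpm.ennreal_toReal)),
      lintegral_add_left measurable_const, setLIntegral_one, mul_add]
    gcongr
    exact lintegral_mono_set (by rw [hA]; exact Set.inter_subset_right)
  have hboundB : (∫⁻ ω in B, (w ω / 2) ^ (q ω).toReal ∂μ) ≤ 2⁻¹ * μ B := by
    have h1 : (∫⁻ ω in B, (w ω / 2) ^ (q ω).toReal ∂μ)
        ≤ ∫⁻ ω in B, 2⁻¹ ∂μ := by
      apply setLIntegral_mono_ae measurable_const.aemeasurable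
      filter_upwards [hwle] with ω hwleω hωB
      obtain ⟨hqne, hpe⟩ := hωB
      have hws : w ω ≤ s := hwleω hpe
      have hq1' : (1:ℝ) ≤ (q ω).toReal := by
        have := ENNReal.toReal_mono hqne (hq1 ω); simpa using this
      have hw2 : w ω / 2 ≤ 2⁻¹ := by
        rw [div_eq_mul_inv]
        calc w ω * 2⁻¹ ≤ 1 * 2⁻¹ := by gcongr; exact hws.trans hs1
          _ = 2⁻¹ := one_mul _
      calc (w ω / 2) ^ (q ω).toReal ≤ (w ω / 2) ^ (1:ℝ) :=
            ENNReal.rpow_le_rpow_of_exponent_ge (hw2.trans (by norm_num)) hq1'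
        _ = w ω / 2 := ENNReal.rpow_one _
        _ ≤ 2⁻¹ := hw2
    refine h1.trans ?_
    rw [setLIntegral_const]
  have hess : essSup (fun ω => w ω / 2) (μ.restrict {ω | q ω = ∞}) ≤ 2⁻¹ * s := by
    have hsub : {ω | q ω = ∞} ≤ᵐ[μ] {ω | p ω = ∞} := by
      filter_upwards [hqp] with ω hω
      intro hq
      simp only [Set.mem_setOf_eq] at *
      exact top_le_iff.mp (hq ▸ hω)
    calc essSup (fun ω => w ω / 2) (μ.restrict {ω | q ω = ∞})
        ≤ essSup (fun ω => w ω / 2) (μ.restrict {ω | p ω = ∞}) :=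
          essSup_mono_measure' (Measure.restrict_mono' hsub le_rfl)
      _ ≤ 2⁻¹ * s := by
          refine essSup_le_of_ae_le (2⁻¹ * s) ?_
          filter_upwards [ENNReal.ae_le_essSup (μ := μ.restrict {ω | p ω = ∞}) w] with ω hω
          rw [div_eq_mul_inv, mul_comm]
          gcongr
  have hμAB : μ A + μ B ≤ 1 := by
    rw [← measure_union hABdisj hBm]
    exact prob_le_one
  calc varModular μ q (fun ω => w ω / 2)
      = (∫⁻ ω in A, (w ω / 2) ^ (q ω).toReal ∂μ)
        + (∫⁻ ω in B, (w ω / 2) ^ (q ω).toReal ∂μ)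
        + essSup (fun ω => w ω / 2) (μ.restrict {ω | q ω = ∞}) := by
        rw [varModular, hsplit]
    _ ≤ (2⁻¹ * μ A + 2⁻¹ * I) + 2⁻¹ * μ B + 2⁻¹ * s := by gcongr
    _ = 2⁻¹ * (μ A + μ B) + 2⁻¹ * (I + s) := by ring
    _ ≤ 2⁻¹ * 1 + 2⁻¹ * 1 := by gcongr
    _ = 1 := by norm_num [ENNReal.inv_two_add_inv_two]

lemma varNorm_le_two_mul [IsProbabilityMeasure μ] {p q : Ω → ℝ≥0∞}
    (hpm : Measurable p) (hqm : Measurable q)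
    (hq1 : ∀ ω, 1 ≤ q ω) (hqp : ∀ᵐ ω ∂μ, q ω ≤ p ω)
    {u : Ω → ℝ≥0∞} (hum : Measurable u) :
    varNorm μ q u ≤ 2 * varNorm μ p u := by
  set S := {γ : ℝ≥0∞ | 0 < γ ∧ γ ≠ ∞ ∧ varModular μ p (fun ω => u ω / γ) ≤ 1} with hS
  have key : ∀ γ ∈ S, varNorm μ q u ≤ 2 * γ := by
    rintro γ ⟨hγ0, hγt, hγm⟩
    apply sInf_le
    refine ⟨ENNReal.mul_pos (by norm_num) hγ0.ne', ENNReal.mul_ne_top (by norm_num) hγt, ?_⟩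
    have heq : (fun ω => u ω / (2 * γ)) = fun ω => (u ω / γ) / 2 := by
      funext ω
      rw [div_eq_mul_inv, div_eq_mul_inv, div_eq_mul_inv,
        ENNReal.mul_inv (Or.inl (by norm_num)) (Or.inl (by norm_num))]
      ring
    rw [heq]
    exact modular_half hpm hqm hq1 hqp (hum.div_const γ) hγm
  calc varNorm μ q u ≤ ⨅ γ : S, 2 * γ.1 := le_iInf fun γ => key γ.1 γ.2
    _ = 2 * ⨅ γ : S, γ.1 :=
        (ENNReal.mul_iInf_of_ne (by norm_num) (by norm_num)).symm
    _ = 2 * varNorm μ p u := by rw [varNorm, sInf_eq_iInf']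


lemma exists_subset_small [IsProbabilityMeasure μ]
    (hna : ∀ s : Set Ω, MeasurableSet s → 0 < μ s →
      ∃ t ⊆ s, MeasurableSet t ∧ 0 < μ t ∧ μ t < μ s)
    {S : Set Ω} (hSm : MeasurableSet S) (hS : 0 < μ S) {ε : ℝ≥0∞} (hε : 0 < ε) :
    ∃ t ⊆ S, MeasurableSet t ∧ 0 < μ t ∧ μ t ≤ ε := by
  have half : ∀ T : Set Ω, MeasurableSet T → 0 < μ T →
      ∃ t ⊆ T, MeasurableSet t ∧ 0 < μ t ∧ μ t ≤ μ T / 2 := by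
    intro T hTm hT
    obtain ⟨t, htT, htm, ht0, htlt⟩ := hna T hTm hT
    have hdiff : μ (T \ t) = μ T - μ t :=
      measure_diff htT htm.nullMeasurableSet (measure_lt_top μ t).ne
    rcases le_total (μ t) (μ T / 2) with h | h
    · exact ⟨t, htT, htm, ht0, h⟩
    · refine ⟨T \ t, Set.diff_subset, hTm.diff htm, ?_, ?_⟩
      · rw [hdiff]; exact tsub_pos_of_lt htlt
      · rw [hdiff, tsub_le_iff_right]
        calc μ T = μ T / 2 + μ T / 2 := (ENNReal.add_halves _).symm
          _ ≤ μ T / 2 + μ t := by gcongr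
  have iter : ∀ n : ℕ, ∃ t ⊆ S, MeasurableSet t ∧ 0 < μ t ∧ μ t ≤ μ S * 2⁻¹ ^ n := by
    intro n
    induction n with
    | zero => exact ⟨S, subset_rfl, hSm, hS, by simp⟩
    | succ k ih =>
      obtain ⟨t, htS, htm, ht0, htle⟩ := ih
      obtain ⟨t', ht't, ht'm, ht'0, ht'le⟩ := half t htm ht0
      refine ⟨t', ht't.trans htS, ht'm, ht'0, ?_⟩
      calc μ t' ≤ μ t / 2 := ht'le
        _ ≤ (μ S * 2⁻¹ ^ k) / 2 := by gcongr
        _ = μ S * 2⁻¹ ^ (k + 1) := by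
            rw [div_eq_mul_inv, pow_succ, mul_assoc]
  obtain ⟨n, hn⟩ := ENNReal.exists_inv_two_pow_lt hε.ne'
  obtain ⟨t, htS, htm, ht0, htle⟩ := iter n
  refine ⟨t, htS, htm, ht0, htle.trans ?_⟩
  calc μ S * 2⁻¹ ^ n ≤ 1 * 2⁻¹ ^ n := by gcongr; exact prob_le_one
    _ = 2⁻¹ ^ n := one_mul _
    _ ≤ ε := hn.le

lemma exists_disjoint_seq [IsProbabilityMeasure μ]
    (hna : ∀ s : Set Ω, MeasurableSet s → 0 < μ s →
      ∃ t ⊆ s, MeasurableSet t ∧ 0 < μ t ∧ μ t < μ s)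
    {F : Set Ω} (hFm : MeasurableSet F) (hF : 0 < μ F)
    (ε : ℕ → ℝ≥0∞) (hε : ∀ n, 0 < ε n) :
    ∃ A : ℕ → Set Ω, (∀ n, MeasurableSet (A n)) ∧ (∀ n, A n ⊆ F) ∧
      Pairwise (Function.onFun Disjoint A) ∧ (∀ n, 0 < μ (A n)) ∧
      ∀ n, μ (A n) ≤ ε n := by
  classical
  have step : ∀ (n : ℕ) (T : Set Ω), MeasurableSet T → 0 < μ T →
      ∃ t, t ⊆ T ∧ MeasurableSet t ∧ 0 < μ t ∧ μ t ≤ ε n ∧ μ t ≤ μ T / 2 := by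
    intro n T hTm hT
    obtain ⟨t, h1, h2, h3, h4⟩ := exists_subset_small hna hTm hT
      (lt_min (hε n) (ENNReal.half_pos hT.ne'))
    exact ⟨t, h1, h2, h3, h4.trans (min_le_left _ _), h4.trans (min_le_right _ _)⟩
  choose! pick hsub hmeas hpos hle hhalf using step
  let Srec : ℕ → Set Ω := fun n => Nat.rec F (fun k Sk => Sk \ pick k Sk) n
  have hrec : ∀ k, Srec (k + 1) = Srec k \ pick k (Srec k) := fun k => rfl
  have hinv : ∀ n, MeasurableSet (Srec n) ∧ 0 < μ (Srec n) ∧ Srec n ⊆ F := by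
    intro n
    induction n with
    | zero => exact ⟨hFm, hF, subset_rfl⟩
    | succ k ih =>
      obtain ⟨hm, hpos', hsubF⟩ := ih
      have hμ : 0 < μ (Srec (k + 1)) := by
        rw [hrec, measure_diff (hsub k _ hm hpos') (hmeas k _ hm hpos').nullMeasurableSet
          (measure_lt_top μ _).ne]
        exact tsub_pos_of_lt ((hhalf k _ hm hpos').trans_lt
          (ENNReal.half_lt_self hpos'.ne' (measure_lt_top μ _).ne))
      exact ⟨hm.diff (hmeas k _ hm hpos'), hμ, Set.diff_subset.trans hsubF⟩
  have hanti : Antitone Srec := antitone_nat_of_succ_le fun k => by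
    rw [hrec]; exact Set.diff_subset
  refine ⟨fun n => pick n (Srec n), fun n => hmeas n _ (hinv n).1 (hinv n).2.1,
    fun n => (hsub n _ (hinv n).1 (hinv n).2.1).trans (hinv n).2.2, ?_,
    fun n => hpos n _ (hinv n).1 (hinv n).2.1,
    fun n => hle n _ (hinv n).1 (hinv n).2.1⟩
  have hd : ∀ m n, m < n → Disjoint (pick m (Srec m)) (pick n (Srec n)) := by
    intro m n hmn
    have h1 : pick n (Srec n) ⊆ Srec m \ pick m (Srec m) := by
      rw [← hrec]
      exact (hsub n _ (hinv n).1 (hinv n).2.1).trans (hanti hmn)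
    exact Set.disjoint_sdiff_right.mono_right h1
  intro i j hij
  rcases hij.lt_or_gt with h | h
  · exact hd i j h
  · exact (hd j i h).symm


lemma main_construction [IsProbabilityMeasure μ]
    (hna : ∀ s : Set Ω, MeasurableSet s → 0 < μ s →
      ∃ t ⊆ s, MeasurableSet t ∧ 0 < μ t ∧ μ t < μ s)
    {p q : Ω → ℝ≥0∞} (hpm : Measurable p) (hqm : Measurable q) (hp1 : ∀ ω, 1 ≤ p ω)
    {F : Set Ω} (hFm : MeasurableSet F) (hF : 0 < μ F)
    {r s : ℝ} (hr : 1 ≤ r) (hrs : r < s)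
    (hpF : ∀ ω ∈ F, p ω ≤ ENNReal.ofReal r)
    (hqF : (∀ ω ∈ F, q ω = ∞) ∨ (∀ ω ∈ F, ENNReal.ofReal s ≤ q ω ∧ q ω ≠ ∞)) :
    ∃ u : Ω → ℝ, Measurable u ∧
      varNorm μ p (fun ω => ENNReal.ofReal |u ω|) ≤ 1 ∧
      varNorm μ q (fun ω => ENNReal.ofReal |u ω|) = ∞ := by
  classical
  have hs0 : (0:ℝ) < s := lt_of_lt_of_le one_pos (le_of_lt (lt_of_le_of_lt hr hrs))
  have hsr0 : (0:ℝ) < s - r := by linarith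
  set e : ℕ → ℝ≥0∞ := fun n => (2:ℝ≥0∞) ^ (-(((n:ℝ)+2) * (s/(s-r)))) with he_def
  set ε : ℕ → ℝ≥0∞ := fun n => min (e n) (((n:ℝ≥0∞)) ^ s)⁻¹ with hε_def
  have hε_pos : ∀ n, 0 < ε n := by
    intro n
    apply lt_min
    · exact ENNReal.rpow_pos (by norm_num) (by norm_num)
    · rw [ENNReal.inv_pos]
      exact ENNReal.rpow_ne_top_of_nonneg hs0.le (ENNReal.natCast_ne_top n)
  obtain ⟨A, hAm, hAF, hAdisj, hApos, hAle⟩ := exists_disjoint_seq hna hFm hF ε hε_pos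
  set a : ℕ → ℝ≥0∞ := fun n => μ (A n) with ha_def
  have ha0 : ∀ n, a n ≠ 0 := fun n => (hApos n).ne'
  have hat : ∀ n, a n ≠ ∞ := fun n => (measure_lt_top μ _).ne
  set c : ℕ → ℝ≥0∞ := fun n => (a n) ^ (-(1/s)) with hc_def
  have hc : ∀ n : ℕ, c n = (a n) ^ (-(1/s)) := fun n => rfl
  have he : ∀ n : ℕ, e n = (2:ℝ≥0∞) ^ (-(((n:ℝ)+2) * (s/(s-r)))) := fun n => rfl
  have hct : ∀ n, c n ≠ ∞ := by
    intro n
    rw [hc n]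
    intro h
    rw [ENNReal.rpow_eq_top_iff] at h
    rcases h with ⟨h1, _⟩ | ⟨h1, h2⟩
    · exact ha0 n h1
    · exact hat n h1
  have hcs : ∀ n, c n ^ s = (a n)⁻¹ := by
    intro n
    rw [hc n]
    rw [← ENNReal.rpow_mul, show -(1/s) * s = (-1 : ℝ) by field_simp,
      ENNReal.rpow_neg_one]
  have hcr : ∀ n, c n ^ r * a n = (a n) ^ ((s-r)/s) := by
    intro n
    rw [hc n]
    rw [← ENNReal.rpow_mul]
    calc (a n) ^ (-(1/s)*r) * a n = (a n) ^ (-(1/s)*r) * (a n) ^ (1:ℝ) := by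
          rw [ENNReal.rpow_one]
      _ = (a n) ^ (-(1/s)*r + 1) := (ENNReal.rpow_add _ _ (ha0 n) (hat n)).symm
      _ = (a n) ^ ((s-r)/s) := by congr 1; field_simp; ring
  have hanti : ∀ x y : ℝ≥0∞, x ≤ y → y ^ (-(1/s)) ≤ x ^ (-(1/s)) := by
    intro x y hxy
    rw [ENNReal.rpow_neg, ENNReal.rpow_neg]
    exact ENNReal.inv_le_inv.2 (ENNReal.rpow_le_rpow hxy (by positivity))
  have hcn : ∀ n : ℕ, (n : ℝ≥0∞) ≤ c n := by
    intro n
    have h1 : a n ≤ ((n:ℝ≥0∞) ^ s)⁻¹ := (hAle n).trans (min_le_right _ _)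
    have h2 := hanti _ _ h1
    rw [hc n]
    refine le_trans (le_of_eq ?_) h2
    rw [← ENNReal.rpow_neg, ← ENNReal.rpow_mul,
      show (-s)*(-(1/s)) = (1:ℝ) by field_simp, ENNReal.rpow_one]
  have hcra : ∀ n, c n ^ r * a n ≤ 2 ^ (-((n:ℝ)+2)) := by
    intro n
    rw [hcr n]
    have h1 : a n ≤ e n := (hAle n).trans (min_le_left _ _)
    calc (a n) ^ ((s-r)/s) ≤ (e n) ^ ((s-r)/s) :=
          ENNReal.rpow_le_rpow h1 (by positivity)
      _ = 2 ^ (-((n:ℝ)+2)) := by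
          rw [he n]
          rw [← ENNReal.rpow_mul]
          congr 1
          field_simp
  have ha2 : ∀ n, a n ≤ 2 ^ (-((n:ℝ)+2)) := by
    intro n
    refine ((hAle n).trans (min_le_left _ _)).trans ?_
    rw [he n]
    apply ENNReal.rpow_le_rpow_of_exponent_le (by norm_num)
    have hge : (1:ℝ) ≤ s/(s-r) := by
      rw [le_div_iff₀ hsr0]; linarith
    have hnn : (0:ℝ) ≤ (n:ℝ) + 2 := by positivity
    nlinarith
  have hgeom : (∑' n : ℕ, (2:ℝ≥0∞) ^ (-((n:ℝ)+2))) = 2⁻¹ := by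
    have heq : ∀ n : ℕ, (2:ℝ≥0∞) ^ (-((n:ℝ)+2)) = 2⁻¹^2 * 2⁻¹ ^ n := by
      intro n
      rw [ENNReal.rpow_neg, show ((n:ℝ)+2) = ((n + 2 : ℕ) : ℝ) by push_cast; ring,
        ENNReal.rpow_natCast, ENNReal.inv_pow, pow_add]
      ring
    calc (∑' n : ℕ, (2:ℝ≥0∞) ^ (-((n:ℝ)+2))) = ∑' n : ℕ, 2⁻¹^2 * 2⁻¹ ^ n := by
          exact tsum_congr heq
      _ = 2⁻¹^2 * ∑' n : ℕ, (2⁻¹:ℝ≥0∞) ^ n := ENNReal.tsum_mul_left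
      _ = 2⁻¹^2 * (1 - 2⁻¹)⁻¹ := by rw [ENNReal.tsum_geometric]
      _ = 2⁻¹ := by
          rw [ENNReal.one_sub_inv_two, inv_inv, sq, mul_assoc,
            ENNReal.inv_mul_cancel (by norm_num) (by norm_num), mul_one]
  -- the function
  set U : Ω → ℝ≥0∞ := fun ω => ∑' n, (A n).indicator (fun _ => c n) ω with hU_def
  have hUm : Measurable U :=
    Measurable.ennreal_tsum fun n => measurable_const.indicator (hAm n)
  have hUval : ∀ n, ∀ ω ∈ A n, U ω = c n := by
    intro n ω hω
    have : U ω = (A n).indicator (fun _ => c n) ω := by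
      apply tsum_eq_single
      intro m hmn
      apply Set.indicator_of_notMem
      intro hm
      exact (Set.disjoint_left.mp (hAdisj hmn) hm) hω
    rw [this, Set.indicator_of_mem hω]
  have hU0 : ∀ ω, ω ∉ (⋃ n, A n) → U ω = 0 := by
    intro ω hω
    have : ∀ n : ℕ, (A n).indicator (fun _ => c n) ω = 0 := by
      intro n
      exact Set.indicator_of_notMem (fun h => hω (Set.mem_iUnion.mpr ⟨n, h⟩)) _
    simp only [hU_def, this, tsum_zero]
  have hUfin : ∀ ω, U ω ≠ ∞ := by
    intro ω
    by_cases hω : ω ∈ ⋃ n, A n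
    · obtain ⟨n, hn⟩ := Set.mem_iUnion.mp hω
      rw [hUval n ω hn]; exact hct n
    · rw [hU0 ω hω]; exact ENNReal.zero_ne_top
  have hofReal : (fun ω => ENNReal.ofReal |(U ω).toReal|) = U := by
    funext ω
    rw [abs_of_nonneg ENNReal.toReal_nonneg, ENNReal.ofReal_toReal (hUfin ω)]
  refine ⟨fun ω => (U ω).toReal, hUm.ennreal_toReal, ?_, ?_⟩
  · -- varNorm p ≤ 1
    rw [hofReal]
    apply sInf_le
    refine ⟨zero_lt_one, one_ne_top, ?_⟩
    simp only [div_one]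
    have hAp : ∀ n, A n ⊆ {ω | p ω ≠ ∞} := by
      intro n ω hω
      exact ne_top_of_le_ne_top ENNReal.ofReal_ne_top (hpF ω (hAF n hω))
    have hess : essSup U (μ.restrict {ω | p ω = ∞}) ≤ 0 := by
      have hms : MeasurableSet {ω | p ω = ∞} := hpm (measurableSet_singleton ∞)
      refine essSup_le_of_ae_le 0 ?_
      have hae0 : ∀ᵐ ω ∂(μ.restrict {ω | p ω = ∞}), U ω ≤ 0 := by
        rw [ae_restrict_iff' hms]
        apply ae_of_all
        intro ω hω
        have hnot : ω ∉ ⋃ n, A n := by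
          intro hmem
          obtain ⟨n, hn⟩ := Set.mem_iUnion.mp hmem
          exact (hAp n hn) hω
        rw [hU0 ω hnot]
      exact hae0
    have hint : (∫⁻ ω in {ω | p ω ≠ ∞}, U ω ^ (p ω).toReal ∂μ) ≤ 1 := by
      have hUAm : MeasurableSet (⋃ n, A n) := MeasurableSet.iUnion hAm
      have hpinfm : MeasurableSet {ω | p ω ≠ ∞} := (hpm (measurableSet_singleton ∞)).compl
      have hzero : (∫⁻ ω in {ω | p ω ≠ ∞} \ ⋃ n, A n, U ω ^ (p ω).toReal ∂μ) = 0 := by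
        have hfun : ∀ ω ∈ {ω | p ω ≠ ∞} \ ⋃ n, A n,
            U ω ^ (p ω).toReal = (fun _ : Ω => (0:ℝ≥0∞)) ω := by
          intro ω hω
          have hp0 : 0 < (p ω).toReal :=
            ENNReal.toReal_pos (lt_of_lt_of_le zero_lt_one (hp1 ω)).ne' hω.1
          show U ω ^ (p ω).toReal = 0
          rw [hU0 ω hω.2]
          exact ENNReal.zero_rpow_of_pos hp0
        calc (∫⁻ ω in {ω | p ω ≠ ∞} \ ⋃ n, A n, U ω ^ (p ω).toReal ∂μ)
            = ∫⁻ _ in {ω | p ω ≠ ∞} \ ⋃ n, A n, (0:ℝ≥0∞) ∂μ :=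
              setLIntegral_congr_fun (hpinfm.diff hUAm) hfun
          _ = 0 := lintegral_zero
      calc ∫⁻ ω in {ω | p ω ≠ ∞}, U ω ^ (p ω).toReal ∂μ
          ≤ (∫⁻ ω in {ω | p ω ≠ ∞} ∩ ⋃ n, A n, U ω ^ (p ω).toReal ∂μ)
            + ∫⁻ ω in {ω | p ω ≠ ∞} \ ⋃ n, A n, U ω ^ (p ω).toReal ∂μ := by
            nth_rewrite 1 [show {ω | p ω ≠ ∞}
              = ({ω | p ω ≠ ∞} ∩ ⋃ n, A n) ∪ ({ω | p ω ≠ ∞} \ ⋃ n, A n)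
              from (Set.inter_union_diff _ _).symm]
            exact lintegral_union_le _ _ _
        _ ≤ (∫⁻ ω in ⋃ n, A n, U ω ^ (p ω).toReal ∂μ) + 0 := by
            rw [hzero]
            gcongr
            exact Set.inter_subset_right
        _ = (∑' n, ∫⁻ ω in A n, U ω ^ (p ω).toReal ∂μ) + 0 := by
            rw [lintegral_iUnion hAm hAdisj]
        _ ≤ (∑' n, (c n ^ r + 1) * a n) + 0 := by
            gcongr with n
            have hb : ∀ ω ∈ A n, U ω ^ (p ω).toReal ≤ c n ^ r + 1 := by
              intro ω hω
              rw [hUval n ω hω]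
              have hpr : (p ω).toReal ≤ r := by
                have h2 := ENNReal.toReal_mono ENNReal.ofReal_ne_top (hpF ω (hAF n hω))
                rwa [ENNReal.toReal_ofReal (by linarith)] at h2
              rcases le_total (c n) 1 with hcc | hcc
              · exact le_trans (ENNReal.rpow_le_one hcc ENNReal.toReal_nonneg) le_add_self
              · exact le_trans (ENNReal.rpow_le_rpow_of_exponent_le hcc hpr) le_self_add
            calc ∫⁻ ω in A n, U ω ^ (p ω).toReal ∂μ
                ≤ ∫⁻ _ in A n, (c n ^ r + 1) ∂μ :=
                  setLIntegral_mono_ae measurable_const.aemeasurable (ae_of_all _ hb)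
              _ = (c n ^ r + 1) * a n := by rw [setLIntegral_const]
        _ ≤ (∑' n : ℕ, ((2:ℝ≥0∞) ^ (-((n:ℝ)+2)) + 2 ^ (-((n:ℝ)+2)))) + 0 := by
            gcongr with n
            rw [add_mul, one_mul]
            exact add_le_add (hcra n) (ha2 n)
        _ = 2⁻¹ + 2⁻¹ + 0 := by rw [ENNReal.tsum_add, hgeom]
        _ = 1 := by rw [add_zero, ENNReal.inv_two_add_inv_two]
    calc varModular μ p U
        ≤ 1 + 0 := add_le_add hint hess
      _ = 1 := add_zero _
  · -- varNorm q = ∞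
    rw [hofReal, varNorm]
    have hempty : {γ : ℝ≥0∞ | 0 < γ ∧ γ ≠ ∞ ∧
        varModular μ q (fun ω => U ω / γ) ≤ 1} = ∅ := by
      rw [Set.eq_empty_iff_forall_notMem]
      rintro γ ⟨hγ0, hγt, hγle⟩
      obtain ⟨n0, hn0⟩ := ENNReal.exists_nat_gt hγt
      have hγc : ∀ n, n0 ≤ n → γ < c n := by
        intro n hn
        calc γ < n0 := hn0
          _ ≤ (n:ℝ≥0∞) := by exact_mod_cast Nat.cast_le.mpr hn
          _ ≤ c n := hcn n
      rcases hqF with hqinf | hqfin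
      · -- q = ∞ on F
        set ν := μ.restrict {ω | q ω = ∞} with hν
        have hAq : A n0 ⊆ {ω | q ω = ∞} := fun ω hω => hqinf ω (hAF n0 hω)
        have hνA : ν (A n0) ≠ 0 := by
          rw [hν, Measure.restrict_apply (hAm n0),
            Set.inter_eq_self_of_subset_left hAq]
          exact (hApos n0).ne'
        have hfreq : ∃ᵐ ω ∂ν, ω ∈ A n0 := frequently_ae_mem_iff.mpr hνA
        have hae := ENNReal.ae_le_essSup (μ := ν) (fun ω => U ω / γ)
        obtain ⟨ω, hω1, hω2⟩ := (hfreq.and_eventually hae).exists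
        have hlt : 1 < U ω / γ := by
          rw [hUval n0 ω hω1,
            ENNReal.lt_div_iff_mul_lt (Or.inl hγ0.ne') (Or.inl hγt), one_mul]
          exact hγc n0 le_rfl
        have hub : essSup (fun ω => U ω / γ) ν ≤ 1 := le_trans le_add_self hγle
        exact absurd ((hlt.trans_le hω2).trans_le hub) (lt_irrefl _)
      · -- s ≤ q < ∞ on F
        have hterm : ∀ k, ((γ ^ s)⁻¹ : ℝ≥0∞)
            ≤ ∫⁻ ω in A (n0+k), (U ω / γ) ^ (q ω).toReal ∂μ := by
          intro k
          have hbound : ∀ ω ∈ A (n0+k),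
              ((a (n0+k))⁻¹ * (γ^s)⁻¹ : ℝ≥0∞) ≤ (U ω / γ) ^ (q ω).toReal := by
            intro ω hω
            have hUω : U ω = c (n0+k) := hUval _ ω hω
            have hqs : s ≤ (q ω).toReal := by
              have h2 := ENNReal.toReal_mono (hqfin ω (hAF _ hω)).2
                (hqfin ω (hAF _ hω)).1
              rwa [ENNReal.toReal_ofReal hs0.le] at h2
            have hbase : 1 ≤ U ω / γ := by
              rw [hUω, ENNReal.le_div_iff_mul_le (Or.inl hγ0.ne') (Or.inl hγt),
                one_mul]
              exact (hγc _ (Nat.le_add_right _ _)).le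
            calc ((a (n0+k))⁻¹ * (γ^s)⁻¹ : ℝ≥0∞)
                = (c (n0+k))^s * (γ^s)⁻¹ := by rw [hcs]
              _ = (U ω / γ) ^ s := by
                  rw [hUω, ENNReal.div_rpow_of_nonneg _ _ hs0.le, div_eq_mul_inv]
              _ ≤ (U ω / γ) ^ (q ω).toReal :=
                  ENNReal.rpow_le_rpow_of_exponent_le hbase hqs
          calc ((γ ^ s)⁻¹ : ℝ≥0∞)
              = ((a (n0+k))⁻¹ * (γ^s)⁻¹) * a (n0+k) := by
                rw [mul_comm ((a (n0+k))⁻¹), mul_assoc,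
                  ENNReal.inv_mul_cancel (ha0 _) (hat _), mul_one]
            _ = ∫⁻ _ in A (n0+k), ((a (n0+k))⁻¹ * (γ^s)⁻¹) ∂μ :=
                (setLIntegral_const _ _).symm
            _ ≤ ∫⁻ ω in A (n0+k), (U ω / γ) ^ (q ω).toReal ∂μ :=
                setLIntegral_mono ((hUm.div_const γ).pow hqm.ennreal_toReal) hbound
        have hsub : (⋃ k, A (n0 + k)) ⊆ {ω | q ω ≠ ∞} := by
          intro ω hω
          obtain ⟨k, hk⟩ := Set.mem_iUnion.mp hω
          exact (hqfin ω (hAF _ hk)).2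
        have hdisj' : Pairwise (Function.onFun Disjoint fun k => A (n0 + k)) := by
          intro i j hij
          exact hAdisj (by omega : n0 + i ≠ n0 + j)
        have hmono := lintegral_mono_set (μ := μ)
          (f := fun ω => (U ω / γ) ^ (q ω).toReal) hsub
        rw [lintegral_iUnion (fun k => hAm (n0+k)) hdisj'] at hmono
        have hγs0 : ((γ ^ s)⁻¹ : ℝ≥0∞) ≠ 0 := by
          rw [Ne, ENNReal.inv_eq_zero]
          exact ENNReal.rpow_ne_top_of_nonneg hs0.le hγt
        have htop : (∫⁻ ω in {ω | q ω ≠ ∞}, (U ω / γ) ^ (q ω).toReal ∂μ) = ∞ := by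
          have h1 : (⊤:ℝ≥0∞) ≤ ∑' k : ℕ, ∫⁻ ω in A (n0+k),
              (U ω / γ) ^ (q ω).toReal ∂μ := by
            rw [← ENNReal.tsum_const_eq_top_of_ne_zero (α := ℕ) hγs0]
            exact ENNReal.tsum_le_tsum hterm
          exact top_le_iff.mp (h1.trans hmono)
        have : varModular μ q (fun ω => U ω / γ) = ∞ := by
          rw [varModular, htop, top_add]
        rw [this] at hγle
        exact absurd hγle (by simp)
    rw [hempty, sInf_empty]
end Aux

/-- **Embedding of variable exponent Lebesgue spaces.** For variable exponents
`p, q : Ω → [1,∞]` on a non-atomic probability space, `L^{p(·)} ⊆ L^{q(·)}` iff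
`q ≤ p` a.e., and in that case `‖f‖_{q(·)} ≤ 2‖f‖_{p(·)}` for every `f ∈ L^{p(·)}`. -/
theorem embedding_variable_exponent
    {Ω : Type*} [MeasurableSpace Ω] (μ : Measure Ω) [IsProbabilityMeasure μ]
    (hna : ∀ s : Set Ω, MeasurableSet s → 0 < μ s →
      ∃ t ⊆ s, MeasurableSet t ∧ 0 < μ t ∧ μ t < μ s)
    (p q : Ω → ℝ≥0∞) (hpm : Measurable p) (hqm : Measurable q)
    (hp1 : ∀ ω, 1 ≤ p ω) (hq1 : ∀ ω, 1 ≤ q ω) :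
    ({u : Ω → ℝ | Measurable u ∧ varNorm μ p (fun ω => ENNReal.ofReal |u ω|) < ∞} ⊆
        {u : Ω → ℝ | Measurable u ∧ varNorm μ q (fun ω => ENNReal.ofReal |u ω|) < ∞} ↔
      ∀ᵐ ω ∂μ, q ω ≤ p ω) ∧
    ((∀ᵐ ω ∂μ, q ω ≤ p ω) → ∀ u : Ω → ℝ, Measurable u →
      varNorm μ p (fun ω => ENNReal.ofReal |u ω|) < ∞ →
      varNorm μ q (fun ω => ENNReal.ofReal |u ω|) ≤
        2 * varNorm μ p (fun ω => ENNReal.ofReal |u ω|)) := by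
  have main2 : (∀ᵐ ω ∂μ, q ω ≤ p ω) → ∀ u : Ω → ℝ, Measurable u →
      varNorm μ p (fun ω => ENNReal.ofReal |u ω|) < ∞ →
      varNorm μ q (fun ω => ENNReal.ofReal |u ω|) ≤
        2 * varNorm μ p (fun ω => ENNReal.ofReal |u ω|) :=
    fun hae u hum _ => varNorm_le_two_mul hpm hqm hq1 hae hum.abs.ennreal_ofReal
  refine ⟨⟨?_, ?_⟩, main2⟩
  · -- inclusion → ae
    intro hincl
    by_contra hcon
    have h0 : μ {ω | ¬ q ω ≤ p ω} ≠ 0 := fun h => hcon (ae_iff.mpr h)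
    have hEset : {ω | ¬ q ω ≤ p ω} = {ω | p ω < q ω} := by
      ext ω; exact not_le
    rw [hEset] at h0
    set E := {ω | p ω < q ω} with hE
    have hEsub : E ⊆ (E ∩ {ω | q ω = ∞}) ∪ (E ∩ {ω | q ω ≠ ∞}) := by
      intro ω hω
      by_cases h : q ω = ∞
      · exact Or.inl ⟨hω, h⟩
      · exact Or.inr ⟨hω, h⟩
    have hcases : μ (E ∩ {ω | q ω = ∞}) ≠ 0 ∨ μ (E ∩ {ω | q ω ≠ ∞}) ≠ 0 := by
      by_contra hboth
      push_neg at hboth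
      apply h0
      refine le_antisymm ?_ zero_le
      calc μ E ≤ μ ((E ∩ {ω | q ω = ∞}) ∪ (E ∩ {ω | q ω ≠ ∞})) := measure_mono hEsub
        _ ≤ μ (E ∩ {ω | q ω = ∞}) + μ (E ∩ {ω | q ω ≠ ∞}) := measure_union_le _ _
        _ = 0 := by rw [hboth.1, hboth.2, add_zero]
    have contra : ∀ (F : Set Ω), MeasurableSet F → 0 < μ F → ∀ r s : ℝ, 1 ≤ r → r < s →
        (∀ ω ∈ F, p ω ≤ ENNReal.ofReal r) →
        ((∀ ω ∈ F, q ω = ∞) ∨ (∀ ω ∈ F, ENNReal.ofReal s ≤ q ω ∧ q ω ≠ ∞)) → False := by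
      intro F hFm hF r s hr hrs hpF hqF
      obtain ⟨u, hum, hup, huq⟩ :=
        main_construction hna hpm hqm hp1 hFm hF hr hrs hpF hqF
      have hmem := hincl ⟨hum, lt_of_le_of_lt hup ENNReal.one_lt_top⟩
      rw [Set.mem_setOf_eq, huq] at hmem
      exact absurd hmem.2 (lt_irrefl _)
    rcases hcases with hE1 | hE2
    · -- the exponent q is infinite on a positive-measure set
      set G : ℕ → Set Ω := fun k =>
        {ω | p ω ≤ (k:ℝ≥0∞) + 1} ∩ {ω | q ω = ∞} with hG
      have hGm : ∀ k, MeasurableSet (G k) := by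
        intro k
        have h1 : MeasurableSet {ω | p ω ≤ (k:ℝ≥0∞) + 1} := hpm measurableSet_Iic
        have h2 : MeasurableSet {ω | q ω = ∞} := hqm (measurableSet_singleton ∞)
        exact h1.inter h2
      have hcover : E ∩ {ω | q ω = ∞} ⊆ ⋃ k, G k := by
        rintro ω ⟨hω1, hω2⟩
        have hpne : p ω ≠ ∞ := ne_top_of_lt hω1
        obtain ⟨k, hk⟩ := ENNReal.exists_nat_gt hpne
        exact Set.mem_iUnion.mpr ⟨k, ⟨le_trans hk.le le_self_add, hω2⟩⟩
      have hex : ∃ k, μ (G k) ≠ 0 := by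
        by_contra hall
        push_neg at hall
        apply hE1
        refine le_antisymm ?_ zero_le
        calc μ (E ∩ {ω | q ω = ∞}) ≤ μ (⋃ k, G k) := measure_mono hcover
          _ = 0 := measure_iUnion_null hall
      obtain ⟨k, hk⟩ := hex
      refine contra (G k) (hGm k) (pos_iff_ne_zero.mpr hk) ((k:ℝ)+1) ((k:ℝ)+2)
        (by have := Nat.cast_nonneg (α := ℝ) k; linarith) (by linarith)
        (fun ω hω => ?_) (Or.inl fun ω hω => hω.2)
      have heq : ENNReal.ofReal ((k:ℝ)+1) = (k:ℝ≥0∞) + 1 := by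
        rw [ENNReal.ofReal_add (Nat.cast_nonneg k) zero_le_one,
          ENNReal.ofReal_natCast, ENNReal.ofReal_one]
      rw [heq]
      exact hω.1
    · -- the exponent q is finite on a positive-measure set
      set H : ℚ × ℚ → Set Ω := fun rs =>
        if 1 ≤ (rs.1:ℝ) ∧ (rs.1:ℝ) < (rs.2:ℝ) then
          {ω | p ω ≤ ENNReal.ofReal (rs.1:ℝ)} ∩
          {ω | ENNReal.ofReal (rs.2:ℝ) ≤ q ω ∧ q ω ≠ ∞} else ∅ with hH
      have hHm : ∀ rs, MeasurableSet (H rs) := by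
        intro rs
        simp only [hH]
        split_ifs
        · have h1 : MeasurableSet {ω | p ω ≤ ENNReal.ofReal (rs.1:ℝ)} :=
            hpm measurableSet_Iic
          have h2 : MeasurableSet {ω | ENNReal.ofReal (rs.2:ℝ) ≤ q ω} :=
            hqm measurableSet_Ici
          have h3 : MeasurableSet {ω | q ω = ∞} := hqm (measurableSet_singleton ∞)
          exact h1.inter (h2.inter h3.compl)
        · exact MeasurableSet.empty
      have hcover : E ∩ {ω | q ω ≠ ∞} ⊆ ⋃ rs, H rs := by
        rintro ω ⟨hω1, hω2⟩
        have hpne : p ω ≠ ∞ := ne_top_of_lt hω1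
        have h1 : (p ω).toReal < (q ω).toReal :=
          (ENNReal.toReal_lt_toReal hpne hω2).mpr hω1
        obtain ⟨r0, hr0a, hr0b⟩ := exists_rat_btwn h1
        obtain ⟨s0, hs0a, hs0b⟩ := exists_rat_btwn hr0b
        have hp1' : (1:ℝ) ≤ (p ω).toReal := by
          have := ENNReal.toReal_mono hpne (hp1 ω); simpa using this
        have hcond : 1 ≤ (r0:ℝ) ∧ (r0:ℝ) < (s0:ℝ) := by
          constructor
          · linarith
          · exact_mod_cast hs0a
        refine Set.mem_iUnion.mpr ⟨(r0, s0), ?_⟩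
        simp only [hH]
        rw [if_pos hcond]
        refine ⟨?_, ?_, hω2⟩
        · calc p ω = ENNReal.ofReal (p ω).toReal := (ENNReal.ofReal_toReal hpne).symm
            _ ≤ ENNReal.ofReal (r0:ℝ) := ENNReal.ofReal_le_ofReal hr0a.le
        · calc ENNReal.ofReal (s0:ℝ) ≤ ENNReal.ofReal (q ω).toReal :=
              ENNReal.ofReal_le_ofReal hs0b.le
            _ = q ω := ENNReal.ofReal_toReal hω2
      have hex : ∃ rs, μ (H rs) ≠ 0 := by
        by_contra hall
        push_neg at hall
        apply hE2
        refine le_antisymm ?_ zero_le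
        calc μ (E ∩ {ω | q ω ≠ ∞}) ≤ μ (⋃ rs, H rs) := measure_mono hcover
          _ = 0 := measure_iUnion_null hall
      obtain ⟨rs, hk⟩ := hex
      have hcond : 1 ≤ (rs.1:ℝ) ∧ (rs.1:ℝ) < (rs.2:ℝ) := by
        by_contra hc
        apply hk
        simp only [hH]
        rw [if_neg hc]
        exact measure_empty
      have hHeq : H rs = {ω | p ω ≤ ENNReal.ofReal (rs.1:ℝ)} ∩
          {ω | ENNReal.ofReal (rs.2:ℝ) ≤ q ω ∧ q ω ≠ ∞} := by
        simp only [hH]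
        rw [if_pos hcond]
      exact contra (H rs) (hHm rs) (pos_iff_ne_zero.mpr hk) (rs.1:ℝ) (rs.2:ℝ)
        hcond.1 hcond.2
        (fun ω hω => by rw [hHeq] at hω; exact hω.1)
        (Or.inr fun ω hω => by rw [hHeq] at hω; exact hω.2)
  · -- ae → inclusion
    intro hae u hu
    refine ⟨hu.1, lt_of_le_of_lt (main2 hae u hu.1 hu.2) ?_⟩
    exact ENNReal.mul_lt_top (by norm_num) hu.2
end
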